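/- Let A be a real symmetric 3×3 matrix and let M, K ∈ ℝ³. Let G be the subgroup of the orthogonal group O(3) consisting of all R with R·A·Rᵀ = A, R·M = M and R·K = K. Then G is nontrivial (contains an element other than the identity) if and only if there exists a nonzero vector v ∈ ℝ³ that is an eigenvector of A and satisfies ⟨v, M⟩ = 0 and ⟨v, K⟩ = 0. -/

import Mathlib

open Matrix

lemma star_eq_transpose' (R : Matrix (Fin 3) (Fin 3) ℝ) : star R = Rᵀ := by
  rw [Matrix.star_eq_conjTranspose, Matrix.conjTranspose]
  ext i j; simp

lemma vecMulVec_mulVec' (v w : Fin 3 → ℝ) :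
    (vecMulVec v v).mulVec w = (v ⬝ᵥ w) • v := by
  ext i
  simp [mulVec, vecMulVec_apply, dotProduct, Finset.mul_sum, mul_assoc, mul_comm, mul_left_comm]

lemma vecMulVec_mul_self' (v : Fin 3 → ℝ) :
    vecMulVec v v * vecMulVec v v = (v ⬝ᵥ v) • vecMulVec v v := by
  ext i j
  simp [mul_apply, vecMulVec_apply, dotProduct, smul_eq_mul, Finset.sum_mul]
  exact Finset.sum_congr rfl fun k _ => by ring

lemma vecMulVec_smul_left' (lam : ℝ) (v w : Fin 3 → ℝ) :
    vecMulVec (lam • v) w = lam • vecMulVec v w := by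
  ext i j; simp [vecMulVec_apply, mul_assoc]

lemma vecMulVec_smul_right' (lam : ℝ) (v w : Fin 3 → ℝ) :
    vecMulVec v (lam • w) = lam • vecMulVec v w := by
  ext i j; simp [vecMulVec_apply]; ring

lemma vecMulVec_transpose' (v : Fin 3 → ℝ) : (vecMulVec v v)ᵀ = vecMulVec v v := by
  ext i j; simp [vecMulVec_apply, mul_comm]

lemma mul_vecMulVec' (A : Matrix (Fin 3) (Fin 3) ℝ) (v : Fin 3 → ℝ) :
    A * vecMulVec v v = vecMulVec (A.mulVec v) v := by
  ext i j
  simp [mul_apply, vecMulVec_apply, mulVec, dotProduct, Finset.sum_mul, mul_assoc]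

lemma vecMulVec_mul' (A : Matrix (Fin 3) (Fin 3) ℝ) (v : Fin 3 → ℝ) :
    vecMulVec v v * A = vecMulVec v (Aᵀ.mulVec v) := by
  ext i j
  simp [mul_apply, vecMulVec_apply, mulVec, dotProduct, Finset.mul_sum, mul_comm, mul_left_comm]

/-- Proposition 2(a) (spacelike reduction): the group of common orthogonal symmetries
of `A`, `M`, `K` is nontrivial iff there is a nonzero eigenvector of `A` orthogonal to
both `M` and `K`. -/
theorem stmt_6 (A : Matrix (Fin 3) (Fin 3) ℝ) (hA : A.IsSymm)
    (M K : Fin 3 → ℝ)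
    (G : Set (Matrix (Fin 3) (Fin 3) ℝ))
    (hG : G = {R | R ∈ Matrix.orthogonalGroup (Fin 3) ℝ ∧
      R * A * Rᵀ = A ∧ R.mulVec M = M ∧ R.mulVec K = K}) :
    (∃ R ∈ G, R ≠ 1) ↔
      ∃ v : Fin 3 → ℝ, v ≠ 0 ∧ (∃ lam : ℝ, A.mulVec v = lam • v) ∧
        v ⬝ᵥ M = 0 ∧ v ⬝ᵥ K = 0 := by
  subst hG
  constructor
  · -- forward direction
    rintro ⟨R, ⟨hO, hRA, hM, hK⟩, hR1⟩
    have hstar : star R = Rᵀ := star_eq_transpose' R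
    have hRR : Rᵀ * R = 1 := by
      have := (Matrix.mem_orthogonalGroup_iff' (Fin 3) ℝ).mp hO
      exact this
    have hRR' : R * Rᵀ = 1 := by
      have := (Matrix.mem_orthogonalGroup_iff (Fin 3) ℝ).mp hO
      exact this
    -- A and R commute
    have hcomm : R * A = A * R := by
      have : R * A * Rᵀ * R = A * R := by rw [hRA]
      rwa [mul_assoc (R * A), hRR, mul_one] at this
    -- move to EuclideanSpace
    set E := EuclideanSpace ℝ (Fin 3)
    let T : E →ₗ[ℝ] E := Matrix.toEuclideanLin A
    let S : E →ₗ[ℝ] E := Matrix.toEuclideanLin R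
    have hTapp : ∀ x : E, T x = (WithLp.equiv 2 (Fin 3 → ℝ)).symm
        (A.mulVec ((WithLp.equiv 2 (Fin 3 → ℝ)) x)) := fun x => rfl
    have hSapp : ∀ x : E, S x = (WithLp.equiv 2 (Fin 3 → ℝ)).symm
        (R.mulVec ((WithLp.equiv 2 (Fin 3 → ℝ)) x)) := fun x => rfl
    have hTsymm : T.IsSymmetric := by
      have : A.IsHermitian := by
        rw [Matrix.IsHermitian, Matrix.conjTranspose]
        have h' : Aᵀ = A := hA
        rw [← h']; ext i j; simp
        exact congrFun (congrFun h' j) i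
      exact Matrix.isHermitian_iff_isSymmetric.mp this
    have hTS : ∀ x : E, T (S x) = S (T x) := by
      intro x
      rw [hTapp, hSapp, hSapp, hTapp]
      simp only [Equiv.apply_symm_apply, Matrix.mulVec_mulVec]
      rw [hcomm]
    -- the fixed space of S
    let W0 : Submodule ℝ E := LinearMap.ker (S - LinearMap.id)
    have hmemW0 : ∀ x : E, x ∈ W0 ↔ S x = x := by
      intro x
      simp [W0, LinearMap.mem_ker, sub_eq_zero]
    have hW0ne : W0 ≠ ⊤ := by
      intro h
      apply hR1
      apply Matrix.toEuclideanLin.injective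
      ext x : 1
      have hx : x ∈ W0 := h ▸ Submodule.mem_top
      rw [hmemW0] at hx
      show S x = Matrix.toEuclideanLin (1 : Matrix (Fin 3) (Fin 3) ℝ) x
      have h1 : Matrix.toEuclideanLin (1 : Matrix (Fin 3) (Fin 3) ℝ) x = x := by
        rw [Matrix.toEuclideanLin_apply, Matrix.one_mulVec]
      rw [hx, h1]
    -- the orthogonal complement is nontrivial and invariant under T
    have hWbot : W0ᗮ ≠ ⊥ := by
      intro h
      exact hW0ne (Submodule.orthogonal_eq_bot_iff.mp h)
    have hW0inv : ∀ x ∈ W0, T x ∈ W0 := by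
      intro x hx
      rw [hmemW0] at hx ⊢
      rw [← hTS, hx]
    have hWinv : ∀ x ∈ W0ᗮ, T x ∈ W0ᗮ := by
      intro x hx
      rw [Submodule.mem_orthogonal] at hx ⊢
      intro y hy
      rw [← hTsymm (x := y) (y := x)]
      exact hx _ (hW0inv y hy)
    have hWinv' : Set.MapsTo T W0ᗮ W0ᗮ := hWinv
    let T' := T.restrict hWinv'
    have hT'symm : T'.IsSymmetric := hTsymm.restrict_invariant hWinv'
    have : Nontrivial W0ᗮ := Submodule.nontrivial_iff_ne_bot.mpr hWbot
    obtain ⟨μ, hμ⟩ : ∃ μ : ℝ, Module.End.HasEigenvalue T' μ :=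
      ⟨_, hT'symm.hasEigenvalue_iSup_of_finiteDimensional⟩
    obtain ⟨w, hw⟩ := hμ.exists_hasEigenvector
    have hw0 : (w : E) ≠ 0 := fun h => hw.right (Subtype.coe_injective (by simpa using h))
    have hweig : T' w = μ • w := Module.End.mem_eigenspace_iff.mp hw.left
    have hTw : T (w : E) = μ • (w : E) := by
      have := congrArg (Subtype.val) hweig
      exact this
    -- produce the concrete vector
    refine ⟨(WithLp.equiv 2 (Fin 3 → ℝ)) (w : E), ?_, ⟨μ, ?_⟩, ?_, ?_⟩
    · intro h
      exact hw0 ((WithLp.equiv 2 (Fin 3 → ℝ)).injective (by simpa using h))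
    · have := congrArg (WithLp.equiv 2 (Fin 3 → ℝ)) hTw
      rw [hTapp] at this
      simp at this; exact this
    · -- orthogonality to M
      have hMW0 : (WithLp.equiv 2 (Fin 3 → ℝ)).symm M ∈ W0 := by
        rw [hmemW0, hSapp]
        simp [hM]
      have := (Submodule.mem_orthogonal W0 (w : E)).mp w.2 _ hMW0
      rw [real_inner_comm, PiLp.inner_apply] at this
      simpa [dotProduct, RCLike.inner_apply, mul_comm] using this
    · -- orthogonality to K
      have hKW0 : (WithLp.equiv 2 (Fin 3 → ℝ)).symm K ∈ W0 := by
        rw [hmemW0, hSapp]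
        simp [hK]
      have := (Submodule.mem_orthogonal W0 (w : E)).mp w.2 _ hKW0
      rw [real_inner_comm, PiLp.inner_apply] at this
      simpa [dotProduct, RCLike.inner_apply, mul_comm] using this
  · -- backward direction
    rintro ⟨v, hv, ⟨lam, hlam⟩, hvM, hvK⟩
    have hc : v ⬝ᵥ v ≠ 0 := fun h => hv (dotProduct_self_eq_zero.mp h)
    set c : ℝ := v ⬝ᵥ v with hcdef
    set a : ℝ := 2 / c with hadef
    set P : Matrix (Fin 3) (Fin 3) ℝ := vecMulVec v v with hPdef
    set R : Matrix (Fin 3) (Fin 3) ℝ := 1 - a • P with hRdef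
    have hPsymm : Pᵀ = P := vecMulVec_transpose' v
    have hRT : Rᵀ = R := by
      rw [hRdef, Matrix.transpose_sub, Matrix.transpose_one, Matrix.transpose_smul, hPsymm]
    have hRR : R * R = 1 := by
      have h1 : R * R = 1 - a • P - a • P + (a * a) • (P * P) := by
        rw [hRdef]
        simp only [sub_mul, mul_sub, one_mul, mul_one, Matrix.smul_mul, Matrix.mul_smul,
          smul_smul]
        abel
      rw [h1, vecMulVec_mul_self' v, ← hPdef, ← hcdef, smul_smul]
      have hac : a * a * c = a + a := by
        rw [hadef]; field_simp; ring
      rw [hac, add_smul]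
      abel
    have hAP : A * P = lam • P := by
      rw [hPdef, mul_vecMulVec', hlam, vecMulVec_smul_left']
    have hPA : P * A = lam • P := by
      rw [hPdef, vecMulVec_mul']
      have : Aᵀ = A := hA
      rw [this, hlam, vecMulVec_smul_right']
    refine ⟨R, ⟨?_, ?_, ?_, ?_⟩, ?_⟩
    · rw [Matrix.mem_orthogonalGroup_iff, hRT, hRR]
    · have hcomm : R * A = A * R := by
        rw [hRdef, sub_mul, mul_sub, one_mul, mul_one, Matrix.smul_mul, Matrix.mul_smul,
          hAP, hPA]
      rw [hcomm, mul_assoc, hRT, hRR, mul_one]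
    · rw [hRdef, Matrix.sub_mulVec, Matrix.one_mulVec, Matrix.smul_mulVec,
        vecMulVec_mulVec', hvM, zero_smul, smul_zero, sub_zero]
    · rw [hRdef, Matrix.sub_mulVec, Matrix.one_mulVec, Matrix.smul_mulVec,
        vecMulVec_mulVec', hvK, zero_smul, smul_zero, sub_zero]
    · intro h
      have h1 : R.mulVec v = v := by rw [h, Matrix.one_mulVec]
      have h2 : R.mulVec v = -v := by
        rw [hRdef, Matrix.sub_mulVec, Matrix.one_mulVec, Matrix.smul_mulVec,
          vecMulVec_mulVec', ← hcdef, smul_smul, hadef]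
        have : 2 / c * c = 2 := by field_simp
        rw [this]
        ext i; simp; ring
      rw [h1] at h2
      apply hv
      have : (2 : ℝ) • v = 0 := by
        rw [two_smul]; nth_rewrite 1 [h2]; abel
      simpa using (smul_eq_zero.mp this).resolve_left (by norm_num)
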